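/- Let G be a simple graph, Q a set of vertices of G, and let |Q,Q̄| denote the number of edges with one endpoint in Q and one in the complement Q̄ of Q. Then the sum of degrees of vertices in Q equals |Q|(|Q|-1) plus the sum over vertices p in Q̄ of min{|Q|, deg(p)} if and only if (1) Q is a clique, (2) every vertex in Q̄ of degree less than |Q| has all of its neighbors in Q, and (3) every vertex in Q̄ of degree at least |Q| is adjacent to every vertex of Q. -/

import Mathlib

open SimpleGraph Finset

/-- `s` is an independent set in `G`. -/
def IsIndepSet {α : Type*} (G : SimpleGraph α) (s : Set α) : Prop :=
  s.Pairwise fun a b => ¬ G.Adj a b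

/-- `(G, A, B)` is a splitted graph: `A` an independent set and `B` a clique
partitioning the vertex set of `G`. -/
def IsSplitted {α : Type*} (G : SimpleGraph α) (A B : Set α) : Prop :=
  _root_.IsIndepSet G A ∧ G.IsClique B ∧ A ∪ B = Set.univ ∧ Disjoint A B

/-- `G` is a split graph. -/
def IsSplitGraph {α : Type*} (G : SimpleGraph α) : Prop :=
  ∃ A B : Set α, IsSplitted G A B

/-- Tyshkevich composition `(G, A, B) ∘ H`: the disjoint union of `G` and `H`
together with all edges between the clique `B` and the vertices of `H`. -/
def comp {α β : Type*} (G : SimpleGraph α) (B : Set α) (H : SimpleGraph β) :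
    SimpleGraph (α ⊕ β) where
  Adj x y :=
    match x, y with
    | Sum.inl a, Sum.inl a' => G.Adj a a'
    | Sum.inr b, Sum.inr b' => H.Adj b b'
    | Sum.inl a, Sum.inr _ => a ∈ B
    | Sum.inr _, Sum.inl a => a ∈ B
  symm := by
    refine ⟨?_⟩; rintro (a | b) (a' | b') h
    · exact G.adj_symm h
    · exact h
    · exact h
    · exact H.adj_symm h
  loopless := by
    refine ⟨?_⟩; rintro (a | b) h
    · exact G.irrefl h
    · exact H.irrefl h

/-- The degree of a vertex, as the cardinality of its neighborhood. -/
noncomputable def deg {α : Type*} (G : SimpleGraph α) (v : α) : ℕ :=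
  (G.neighborSet v).ncard

/-- The disjoint union of two edges. -/
def twoK2 : SimpleGraph (Fin 4) :=
  SimpleGraph.fromRel fun a b => (a.val = 0 ∧ b.val = 1) ∨ (a.val = 2 ∧ b.val = 3)

/-- The 4-cycle. -/
def cycle4 : SimpleGraph (Fin 4) :=
  SimpleGraph.fromRel fun a b =>
    (a.val = 0 ∧ b.val = 1) ∨ (a.val = 1 ∧ b.val = 2) ∨
    (a.val = 2 ∧ b.val = 3) ∨ (a.val = 3 ∧ b.val = 0)

/-- The path on four vertices. -/
def path4 : SimpleGraph (Fin 4) :=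
  SimpleGraph.fromRel fun a b =>
    (a.val = 0 ∧ b.val = 1) ∨ (a.val = 1 ∧ b.val = 2) ∨ (a.val = 2 ∧ b.val = 3)

/-- The 5-cycle. -/
def cycle5 : SimpleGraph (Fin 5) :=
  SimpleGraph.fromRel fun a b =>
    (a.val = 0 ∧ b.val = 1) ∨ (a.val = 1 ∧ b.val = 2) ∨
    (a.val = 2 ∧ b.val = 3) ∨ (a.val = 3 ∧ b.val = 4) ∨ (a.val = 4 ∧ b.val = 0)

/-- The Erdős–Gallai style equality for a vertex set `Q` holds iff
`Q` is a clique, every low-degree vertex outside `Q` has all its neighbors in `Q`,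
and every high-degree vertex outside `Q` is adjacent to all of `Q`. -/
theorem stmt0 {V : Type*} [Fintype V] [DecidableEq V] (G : SimpleGraph V) (Q : Finset V) :
    (∑ q ∈ Q, deg G q =
        Q.card * (Q.card - 1) + ∑ p ∈ Qᶜ, min Q.card (deg G p)) ↔
      (G.IsClique ↑Q ∧
        (∀ p ∉ Q, deg G p < Q.card → ∀ w, G.Adj p w → w ∈ Q) ∧
        (∀ p ∉ Q, Q.card ≤ deg G p → ∀ q ∈ Q, G.Adj p q)) := by
  classical
  have hdeg : ∀ v, deg G v = (univ.filter (G.Adj v)).card := by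
    intro v
    have h : G.neighborSet v = ↑(univ.filter (G.Adj v)) := by
      ext w; simp [SimpleGraph.mem_neighborSet]
    rw [deg, h, Set.ncard_coe_finset]
  set a : V → ℕ := fun v => (Q.filter (G.Adj v)).card with ha
  have hsplit : ∀ v, deg G v = a v + (Qᶜ.filter (G.Adj v)).card := by
    intro v
    rw [hdeg]
    have h : univ.filter (G.Adj v) = Q.filter (G.Adj v) ∪ Qᶜ.filter (G.Adj v) := by
      ext w; by_cases hw : w ∈ Q <;> simp [hw]
    rw [h, Finset.card_union_of_disjoint
      (Finset.disjoint_filter_filter disjoint_compl_right)]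
  have hdouble : ∑ q ∈ Q, (Qᶜ.filter (G.Adj q)).card = ∑ p ∈ Qᶜ, a p := by
    simp_rw [ha, Finset.card_filter]
    rw [Finset.sum_comm]
    refine Finset.sum_congr rfl fun p _ => Finset.sum_congr rfl fun q _ => ?_
    rw [G.adj_comm]
  have hLHS : ∑ q ∈ Q, deg G q = (∑ q ∈ Q, a q) + ∑ p ∈ Qᶜ, a p := by
    rw [← hdouble, ← Finset.sum_add_distrib]
    exact Finset.sum_congr rfl fun q _ => hsplit q
  have hsubE : ∀ q ∈ Q, Q.filter (G.Adj q) ⊆ Q.erase q := by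
    intro q _ w hw
    simp only [Finset.mem_filter] at hw
    exact Finset.mem_erase.2 ⟨(G.ne_of_adj hw.2).symm, hw.1⟩
  have hA : ∀ q ∈ Q, a q ≤ Q.card - 1 := by
    intro q hq
    calc a q ≤ (Q.erase q).card := Finset.card_le_card (hsubE q hq)
      _ = Q.card - 1 := Finset.card_erase_of_mem hq
  have hB : ∀ p ∈ Qᶜ, a p ≤ min Q.card (deg G p) := by
    intro p _
    refine le_min (Finset.card_le_card (Finset.filter_subset _ _)) ?_
    rw [hdeg]
    exact Finset.card_le_card (Finset.filter_subset_filter _ (Finset.subset_univ Q))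
  have key : (∑ q ∈ Q, deg G q =
      Q.card * (Q.card - 1) + ∑ p ∈ Qᶜ, min Q.card (deg G p))
      ↔ ((∀ q ∈ Q, a q = Q.card - 1) ∧ ∀ p ∈ Qᶜ, a p = min Q.card (deg G p)) := by
    rw [hLHS]
    have hconst : ∑ _q ∈ Q, (Q.card - 1) = Q.card * (Q.card - 1) := by
      rw [Finset.sum_const, smul_eq_mul]
    have h1 : ∑ q ∈ Q, a q ≤ Q.card * (Q.card - 1) := by
      rw [← hconst]; exact Finset.sum_le_sum hA
    have h2 : ∑ p ∈ Qᶜ, a p ≤ ∑ p ∈ Qᶜ, min Q.card (deg G p) := Finset.sum_le_sum hB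
    constructor
    · intro h
      have e1 : ∑ q ∈ Q, a q = Q.card * (Q.card - 1) := by omega
      have e2 : ∑ p ∈ Qᶜ, a p = ∑ p ∈ Qᶜ, min Q.card (deg G p) := by omega
      exact ⟨(Finset.sum_eq_sum_iff_of_le hA).1 (by rw [hconst]; exact e1),
        (Finset.sum_eq_sum_iff_of_le hB).1 e2⟩
    · rintro ⟨g1, g2⟩
      rw [Finset.sum_congr rfl g1, hconst, Finset.sum_congr rfl g2]
  rw [key]
  constructor
  · rintro ⟨h1, h2⟩
    refine ⟨?_, ?_, ?_⟩
    · rw [SimpleGraph.isClique_iff]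
      intro x hx y hy hxy
      have hx' : x ∈ Q := hx
      have hy' : y ∈ Q := hy
      have heq : Q.filter (G.Adj x) = Q.erase x :=
        Finset.eq_of_subset_of_card_le (hsubE x hx')
          (by rw [Finset.card_erase_of_mem hx']; exact le_of_eq (h1 x hx').symm)
      have : y ∈ Q.filter (G.Adj x) := by
        rw [heq]; exact Finset.mem_erase.2 ⟨hxy.symm, hy'⟩
      exact (Finset.mem_filter.1 this).2
    · intro p hp hlt w hadj
      have hp' : p ∈ Qᶜ := Finset.mem_compl.2 hp
      have he : a p = deg G p := by
        rw [h2 p hp', min_eq_right (le_of_lt hlt)]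
      have heq : Q.filter (G.Adj p) = univ.filter (G.Adj p) :=
        Finset.eq_of_subset_of_card_le
          (Finset.filter_subset_filter _ (Finset.subset_univ Q))
          (by rw [← hdeg, ← he])
      have : w ∈ Q.filter (G.Adj p) := by
        rw [heq]; exact Finset.mem_filter.2 ⟨Finset.mem_univ w, hadj⟩
      exact (Finset.mem_filter.1 this).1
    · intro p hp hle q hq
      have hp' : p ∈ Qᶜ := Finset.mem_compl.2 hp
      have he : a p = Q.card := by rw [h2 p hp', min_eq_left hle]
      have heq : Q.filter (G.Adj p) = Q :=
        Finset.eq_of_subset_of_card_le (Finset.filter_subset _ _) (le_of_eq he.symm)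
      have : q ∈ Q.filter (G.Adj p) := by rw [heq]; exact hq
      exact (Finset.mem_filter.1 this).2
  · rintro ⟨hc, hlow, hhigh⟩
    constructor
    · intro q hq
      have heq : Q.filter (G.Adj q) = Q.erase q := by
        apply Finset.Subset.antisymm (hsubE q hq)
        intro w hw
        rw [Finset.mem_erase] at hw
        refine Finset.mem_filter.2 ⟨hw.2, ?_⟩
        exact hc (Finset.mem_coe.2 hq) (Finset.mem_coe.2 hw.2) hw.1.symm
      rw [ha]
      simp only
      rw [heq, Finset.card_erase_of_mem hq]
    · intro p hp'
      have hp : p ∉ Q := Finset.mem_compl.1 hp'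
      rcases lt_or_ge (deg G p) Q.card with hlt | hle
      · have heq : Q.filter (G.Adj p) = univ.filter (G.Adj p) := by
          apply Finset.Subset.antisymm
            (Finset.filter_subset_filter _ (Finset.subset_univ Q))
          intro w hw
          rw [Finset.mem_filter] at hw
          exact Finset.mem_filter.2 ⟨hlow p hp hlt w hw.2, hw.2⟩
        rw [min_eq_right (le_of_lt hlt), ha]
        simp only
        rw [heq, ← hdeg]
      · have heq : Q.filter (G.Adj p) = Q := by
          apply Finset.Subset.antisymm (Finset.filter_subset _ _)
          intro w hw
          exact Finset.mem_filter.2 ⟨hw, hhigh p hp hle w hw⟩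
        rw [min_eq_left hle, ha]
        simp only
        rw [heq]
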